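/- Let n ≥ 1, let a₁, …, aₙ ≥ 0 be real numbers, and let x ≥ 0 satisfy aᵢ + x > 0 for every i. Then √((1/n) Σᵢ aᵢ/(aᵢ + x)²) · √((1/n) Σᵢ aᵢ) + √((1/n) Σᵢ (x/(aᵢ + x))²) ≥ 1. -/

import Mathlib

open Finset

theorem stmt2 (n : ℕ) (hn : 1 ≤ n) (a : Fin n → ℝ) (ha : ∀ i, 0 ≤ a i)
    (x : ℝ) (hx : 0 ≤ x) (hax : ∀ i, 0 < a i + x) :
    1 ≤ Real.sqrt ((1 / n : ℝ) * ∑ i, a i / (a i + x) ^ 2) *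
          Real.sqrt ((1 / n : ℝ) * ∑ i, a i)
        + Real.sqrt ((1 / n : ℝ) * ∑ i, (x / (a i + x)) ^ 2) := by
  have hnpos : (0:ℝ) < n := by exact_mod_cast hn
  set S₁ := ∑ i, a i / (a i + x) ^ 2 with hS₁def
  set S₂ := ∑ i, a i with hS₂def
  set S₃ := ∑ i, (x / (a i + x)) ^ 2 with hS₃def
  set T₁ := ∑ i, a i / (a i + x) with hT₁def
  set T₂ := ∑ i, x / (a i + x) with hT₂def
  have hT : T₁ + T₂ = n := by
    rw [hT₁def, hT₂def, ← Finset.sum_add_distrib]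
    have : ∀ i ∈ Finset.univ, a i / (a i + x) + x / (a i + x) = 1 := by
      intro i _
      rw [← add_div, div_self (hax i).ne']
    rw [Finset.sum_congr rfl this]
    simp
  have hT₁ : 0 ≤ T₁ := Finset.sum_nonneg fun i _ =>
    div_nonneg (ha i) (hax i).le
  have hT₂ : 0 ≤ T₂ := Finset.sum_nonneg fun i _ =>
    div_nonneg hx (hax i).le
  have hS₁ : 0 ≤ S₁ := Finset.sum_nonneg fun i _ =>
    div_nonneg (ha i) (sq_nonneg _)
  have hS₂ : 0 ≤ S₂ := Finset.sum_nonneg fun i _ => ha i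
  have hS₃ : 0 ≤ S₃ := Finset.sum_nonneg fun i _ => sq_nonneg _
  have cs1 : T₁ ^ 2 ≤ S₁ * S₂ := by
    have h := Finset.sum_mul_sq_le_sq_mul_sq Finset.univ
      (fun i => Real.sqrt (a i) / (a i + x)) (fun i => Real.sqrt (a i))
    have e1 : ∑ i, Real.sqrt (a i) / (a i + x) * Real.sqrt (a i) = T₁ := by
      apply Finset.sum_congr rfl
      intro i _
      rw [div_mul_eq_mul_div, Real.mul_self_sqrt (ha i)]
    have e2 : ∑ i, (Real.sqrt (a i) / (a i + x)) ^ 2 = S₁ := by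
      apply Finset.sum_congr rfl
      intro i _
      rw [div_pow, Real.sq_sqrt (ha i)]
    have e3 : ∑ i, Real.sqrt (a i) ^ 2 = S₂ := by
      apply Finset.sum_congr rfl
      intro i _
      rw [Real.sq_sqrt (ha i)]
    rwa [e1, e2, e3] at h
  have cs2 : T₂ ^ 2 ≤ (n : ℝ) * S₃ := by
    have h := Finset.sum_mul_sq_le_sq_mul_sq Finset.univ
      (fun _ : Fin n => (1:ℝ)) (fun i => x / (a i + x))
    simpa using h
  have h1 : (1 / n : ℝ) * T₁ ≤ Real.sqrt ((1 / n : ℝ) * S₁) * Real.sqrt ((1 / n : ℝ) * S₂) := by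
    rw [← Real.sqrt_mul (by positivity)]
    rw [Real.le_sqrt (by positivity) (by positivity)]
    have : ((1 / n : ℝ) * T₁) ^ 2 = (1/n)^2 * T₁^2 := by ring
    rw [this]
    calc (1/n:ℝ)^2 * T₁^2 ≤ (1/n)^2 * (S₁ * S₂) := by
          apply mul_le_mul_of_nonneg_left cs1 (by positivity)
      _ = (1/n) * S₁ * ((1/n) * S₂) := by ring
  have h2 : (1 / n : ℝ) * T₂ ≤ Real.sqrt ((1 / n : ℝ) * S₃) := by
    rw [Real.le_sqrt (by positivity) (by positivity)]
    have e : ((1/(n:ℝ)) * T₂)^2 = (1/n^2) * T₂^2 := by ring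
    rw [e, show (1/(n:ℝ)) * S₃ = (1/n^2) * ((n:ℝ)*S₃) by field_simp]
    exact mul_le_mul_of_nonneg_left cs2 (by positivity)
  have : (1:ℝ) = (1/n) * T₁ + (1/n) * T₂ := by
    field_simp
    linarith [hT]
  linarith [h1, h2]
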